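/- arXiv:2403.03569 — 2 statements merged into one kernel-verified Lean document; each statement's English description precedes it below -/
import Mathlib

section
/- The construction attaining the upper bound: for C = {{1,2},{3,4},…,{2n−1,2n}} (n even-indexed pair-classes), define for each pair of classes I < J the bipartition M_{I,J} placing I and all even numbers outside I∪J on one side, and J and all odd numbers outside I∪J on the other side. Then the n(n−1)/2 models so defined are pairwise non-equivalent (no two separate the same set of class pairs). -/
/-- The classes `C_k = {2k+1, 2k+2}` (for `k = 0, …, n-1`), i.e. `{1,2}, {3,4}, …`. -/
def Cls (n : ℕ) (i : Fin n) : Set ℕ := {2 * (i : ℕ) + 1, 2 * (i : ℕ) + 2}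

/-- The model `M_{I,J}` for classes `I ≠ J`: one part contains `I` together with all even
numbers of `E = {1, …, 2n}` outside `I ∪ J`; the other part (its complement) contains `J`
together with all odd numbers outside `I ∪ J`. -/
def Mdl (n : ℕ) (i j : Fin n) : Set ℕ :=
  Cls n i ∪ {x | 1 ≤ x ∧ x ≤ 2 * n ∧ x ∉ Cls n i ∪ Cls n j ∧ Even x}

/-- The set of (ordered versions of the) unordered pairs of classes separated by the
bipartition `(M, Mᶜ)`. -/
def SepSet (n : ℕ) (M : Set ℕ) : Set (Fin n × Fin n) :=
  {p | (Cls n p.1 ⊆ M ∧ Cls n p.2 ⊆ Mᶜ) ∨ (Cls n p.2 ⊆ M ∧ Cls n p.1 ⊆ Mᶜ)}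

lemma mem_Mdl_iff (n : ℕ) (i j : Fin n) (x : ℕ) :
    x ∈ Mdl n i j ↔ (x = 2*(i:ℕ)+1 ∨ x = 2*(i:ℕ)+2) ∨
      (1 ≤ x ∧ x ≤ 2*n ∧ ¬((x = 2*(i:ℕ)+1 ∨ x = 2*(i:ℕ)+2) ∨ (x = 2*(j:ℕ)+1 ∨ x = 2*(j:ℕ)+2)) ∧ x % 2 = 0) := by
  simp [Mdl, Cls, Set.mem_union, Set.mem_setOf_eq, Nat.even_iff]; tauto

lemma odd_mem (n : ℕ) (i j a : Fin n) : 2*(a:ℕ)+1 ∈ Mdl n i j ↔ a = i := by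
  rw [mem_Mdl_iff, Fin.ext_iff]; omega

lemma even_mem (n : ℕ) (i j a : Fin n) (hij : i ≠ j) : 2*(a:ℕ)+2 ∈ Mdl n i j ↔ a ≠ j := by
  have ha := a.isLt
  have h : (i:ℕ) ≠ j := fun h => hij (Fin.ext h)
  rw [mem_Mdl_iff, Ne, Fin.ext_iff]; omega

lemma cls_sub (n : ℕ) (i j a : Fin n) (hij : i ≠ j) : Cls n a ⊆ Mdl n i j ↔ a = i := by
  rw [Cls, Set.insert_subset_iff, Set.singleton_subset_iff, odd_mem, even_mem n i j a hij]
  constructor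
  · exact fun h => h.1
  · rintro rfl; exact ⟨rfl, hij⟩

lemma cls_sub_compl (n : ℕ) (i j a : Fin n) (hij : i ≠ j) : Cls n a ⊆ (Mdl n i j)ᶜ ↔ a = j := by
  rw [Cls, Set.insert_subset_iff, Set.singleton_subset_iff, Set.mem_compl_iff,
    Set.mem_compl_iff, odd_mem, even_mem n i j a hij]
  constructor
  · exact fun h => not_not.mp h.2
  · rintro rfl; exact ⟨fun h => hij h.symm, not_not.mpr rfl⟩

lemma sepset_eq (n : ℕ) (i j : Fin n) (hij : i ≠ j) :
    SepSet n (Mdl n i j) = {(i,j), (j,i)} := by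
  ext ⟨a,b⟩
  simp only [SepSet, Set.mem_setOf_eq, Set.mem_insert_iff, Set.mem_singleton_iff,
    Prod.mk.injEq, cls_sub n i j _ hij, cls_sub_compl n i j _ hij]
  tauto

/-- The construction attaining the upper bound `F(C) = n(n-1)/2`: for the classes
`{1,2}, {3,4}, …, {2n-1,2n}` (`n` even), the `n(n-1)/2` models `M_{I,J}` are pairwise
non-equivalent — models built from distinct pairs of classes separate distinct sets of
class pairs. -/
theorem upper_bound_construction_nonequivalent (n : ℕ) (hn : Even n)
    (i j k l : Fin n) (hij : i < j) (hkl : k < l) (hne : (i, j) ≠ (k, l)) :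
    SepSet n (Mdl n i j) ≠ SepSet n (Mdl n k l) := by
  rw [sepset_eq n i j hij.ne, sepset_eq n k l hkl.ne]
  intro h
  have : (i, j) ∈ ({((k:Fin n),l), (l,k)} : Set (Fin n × Fin n)) := by
    rw [← h]; exact Set.mem_insert _ _
  rcases this with h1 | h1
  · exact hne h1
  · rw [Set.mem_singleton_iff, Prod.mk.injEq] at h1
    obtain ⟨rfl, rfl⟩ := h1
    exact absurd hkl (lt_asymm hij)
end

section
/- If a set S of models separates all pairs of classes and some model M ∈ S separates no fundamental pair not separated by another member of S, then S \ {M} still separates all pairs of classes; hence a minimum separating set cannot contain such a redundant model. -/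
/-- `M` (viewed as the bipartition `(M, Mᶜ)` of `E`) separates the ordered pair `(I, J)`. -/
def Separates {E : Type*} (M I J : Set E) : Prop := I ⊆ M ∧ J ⊆ Mᶜ

/-- `M` separates the unordered pair `{I, J}`. -/
def Sep2 {E : Type*} (M I J : Set E) : Prop := Separates M I J ∨ Separates M J I

/-- If `S` separates all pairs of classes and `M ∈ S` separates no fundamental pair not
separated by another member of `S`, then `S \ {M}` still separates all pairs; hence a
minimum-size separating set cannot contain such a redundant model. -/
theorem redundant_model_removable {E : Type*}
    (C : Set (Set E)) (hdisj : C.Pairwise Disjoint)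
    (Fundamental : Set E → Set E → Prop)
    (S : Finset (Set E)) (M : Set E) (hM : M ∈ S)
    -- `S` separates all pairs of classes
    (hS : ∀ I ∈ C, ∀ J ∈ C, I ≠ J → ∃ M' ∈ S, Sep2 M' I J)
    -- every fundamental pair separated by `M` is also separated by another member of `S`
    (hred : ∀ I ∈ C, ∀ J ∈ C, I ≠ J → Fundamental I J → Sep2 M I J →
      ∃ M' ∈ S, M' ≠ M ∧ Sep2 M' I J)
    -- every non-fundamental pair is dominated (`c < p`) by a fundamental pair: any model
    -- separating the fundamental pair also separates it
    (hdom : ∀ I ∈ C, ∀ J ∈ C, I ≠ J → ¬ Fundamental I J →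
      ∃ K ∈ C, ∃ L ∈ C, K ≠ L ∧ Fundamental K L ∧
        ∀ M' : Set E, Sep2 M' K L → Sep2 M' I J) :
    (∀ I ∈ C, ∀ J ∈ C, I ≠ J → ∃ M' ∈ S, M' ≠ M ∧ Sep2 M' I J) ∧
    ((∀ S' : Finset (Set E),
        (∀ I ∈ C, ∀ J ∈ C, I ≠ J → ∃ M' ∈ S', Sep2 M' I J) → S.card ≤ S'.card) →
      False) := by
  have key : ∀ I ∈ C, ∀ J ∈ C, I ≠ J → ∃ M' ∈ S, M' ≠ M ∧ Sep2 M' I J := by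
    intro I hI J hJ hIJ
    by_cases hF : Fundamental I J
    · obtain ⟨M', hM', hsep⟩ := hS I hI J hJ hIJ
      by_cases hMM : M' = M
      · exact hred I hI J hJ hIJ hF (hMM ▸ hsep)
      · exact ⟨M', hM', hMM, hsep⟩
    · obtain ⟨K, hK, L, hL, hKL, hFKL, hdomin⟩ := hdom I hI J hJ hIJ hF
      obtain ⟨M', hM', hsep⟩ := hS K hK L hL hKL
      by_cases hMM : M' = M
      · obtain ⟨M'', hM'', hne, hsep'⟩ := hred K hK L hL hKL hFKL (hMM ▸ hsep)
        exact ⟨M'', hM'', hne, hdomin M'' hsep'⟩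
      · exact ⟨M', hM', hMM, hdomin M' hsep⟩
  classical
  refine ⟨key, fun hmin => ?_⟩
  have h1 : ∀ I ∈ C, ∀ J ∈ C, I ≠ J → ∃ M' ∈ S.erase M, Sep2 M' I J := by
    intro I hI J hJ hIJ
    obtain ⟨M', hM', hne, hsep⟩ := key I hI J hJ hIJ
    exact ⟨M', Finset.mem_erase.mpr ⟨hne, hM'⟩, hsep⟩
  have := hmin (S.erase M) h1
  have := Finset.card_erase_lt_of_mem hM
  omega
end
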